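/- Let L > 0 and 0 < η < 1/L. Let F : E → ℝ be convex and differentiable with ∇F Lipschitz continuous with constant L, let R : E → ℝ be convex, and set G = F + R. Let x* be a global minimizer of G. For x ∈ E and v ∈ E, let x⁺ be the unique minimizer over y ∈ E of (1/2)‖y − (x − η·v)‖² + η·R(y), and set Δ = v − ∇F(x). Then ‖x⁺ − x*‖² ≤ ‖x − x*‖² − 2η·(G(x⁺) − G(x*)) − 2η·⟨Δ, x⁺ − x*⟩. -/

import Mathlib

open RealInnerProductSpace

section Aux

variable {E : Type*} [NormedAddCommGroup E] [InnerProductSpace ℝ E] [CompleteSpace E]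

/-- Derivative of a function along a line, from the gradient. -/
lemma aux_line_hasDerivAt (F : E → ℝ) (F' : E → E) (hF : ∀ x, HasGradientAt F (F' x) x)
    (x d : E) (t : ℝ) :
    HasDerivAt (fun s : ℝ => F (x + s • d)) ⟪F' (x + t • d), d⟫ t := by
  have hc : HasDerivAt (fun s : ℝ => x + s • d) d t := by
    simpa using ((hasDerivAt_id t).smul_const d).const_add x
  have := ((hF (x + t • d)).hasFDerivAt).comp_hasDerivAt t hc
  simp at this
  exact this

/-- Gradient inequality for a convex function. -/
lemma aux_convex_grad (F : E → ℝ) (F' : E → E) (hF : ∀ x, HasGradientAt F (F' x) x)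
    (hFconv : ConvexOn ℝ Set.univ F) (x y : E) :
    F x + ⟪F' x, y - x⟫ ≤ F y := by
  set d := y - x with hd
  set g : ℝ → ℝ := fun s => F (x + s • d) with hgdef
  have hg0 : g 0 = F x := by simp [hgdef]
  have hder : HasDerivAt g ⟪F' x, d⟫ 0 := by
    simpa using aux_line_hasDerivAt F F' hF x d 0
  have hslope : Filter.Tendsto (slope g 0) (nhdsWithin 0 {(0:ℝ)}ᶜ) (nhds ⟪F' x, d⟫) :=
    hasDerivAt_iff_tendsto_slope.mp hder
  have hslope' : Filter.Tendsto (slope g 0) (nhdsWithin 0 (Set.Ioi 0)) (nhds ⟪F' x, d⟫) :=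
    hslope.mono_left (nhdsWithin_mono 0 (fun t ht => ne_of_gt ht))
  have hev : ∀ᶠ t in nhdsWithin (0:ℝ) (Set.Ioi 0), slope g 0 t ≤ F y - F x := by
    filter_upwards [Ioc_mem_nhdsGT_of_mem (Set.left_mem_Ico.2 one_pos)] with t ht
    obtain ⟨ht0, ht1⟩ := ht
    have hz : x + t • d = (1 - t) • x + t • y := by
      simp [hd, smul_sub, sub_smul]; abel
    have hcv := hFconv.2 (Set.mem_univ x) (Set.mem_univ y)
      (by linarith : (0:ℝ) ≤ 1 - t) (le_of_lt ht0) (by ring)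
    have hgt : g t ≤ (1 - t) * F x + t * F y := by
      rw [hgdef]; simp only []; rw [hz]; simpa using hcv
    have hgg : g t - g 0 ≤ t * (F y - F x) := by rw [hg0]; nlinarith
    rw [slope_def_field, sub_zero, div_le_iff₀ ht0]
    nlinarith
  have hle : ⟪F' x, d⟫ ≤ F y - F x := le_of_tendsto hslope' hev
  linarith

/-- Descent lemma for an `L`-smooth function. -/
lemma aux_descent (L : ℝ) (hL : 0 < L) (F : E → ℝ) (F' : E → E)
    (hF : ∀ x, HasGradientAt F (F' x) x) (hLip : LipschitzWith (Real.toNNReal L) F')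
    (x y : E) :
    F y ≤ F x + ⟪F' x, y - x⟫ + L / 2 * ‖y - x‖ ^ 2 := by
  set d := y - x with hd
  set C : ℝ := ⟪F' x, d⟫ with hC
  set h : ℝ → ℝ := fun t => F (x + t • d) - t * C - L / 2 * t ^ 2 * ‖d‖ ^ 2 with hhdef
  have hder : ∀ t : ℝ, HasDerivAt h (⟪F' (x + t • d), d⟫ - C - L * t * ‖d‖ ^ 2) t := by
    intro t
    have h1 := aux_line_hasDerivAt F F' hF x d t
    have h2 : HasDerivAt (fun s : ℝ => s * C) C t := by
      simpa using (hasDerivAt_id t).mul_const C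
    have h3 : HasDerivAt (fun s : ℝ => L / 2 * s ^ 2 * ‖d‖ ^ 2) (L * t * ‖d‖ ^ 2) t := by
      have : HasDerivAt (fun s : ℝ => s ^ 2) (2 * t) t := by
        simpa using hasDerivAt_pow 2 t
      have := (this.const_mul (L / 2)).mul_const (‖d‖ ^ 2)
      rw [show L * t * ‖d‖ ^ 2 = L / 2 * (2 * t) * ‖d‖ ^ 2 by ring]; exact this
    exact (h1.sub h2).sub h3
  have hanti : AntitoneOn h (Set.Icc 0 1) := by
    apply antitoneOn_of_deriv_nonpos (convex_Icc 0 1)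
    · have hdiff : Differentiable ℝ h := fun t => (hder t).differentiableAt
      exact hdiff.continuous.continuousOn
    · intro t _
      exact (hder t).differentiableAt.differentiableWithinAt
    · intro t ht
      rw [interior_Icc] at ht
      rw [(hder t).deriv]
      have hipr : ⟪F' (x + t • d) - F' x, d⟫ ≤ L * t * ‖d‖ ^ 2 := by
        have h1 : ⟪F' (x + t • d) - F' x, d⟫ ≤ ‖F' (x + t • d) - F' x‖ * ‖d‖ :=
          real_inner_le_norm _ _
        have h2 : ‖F' (x + t • d) - F' x‖ ≤ L * (t * ‖d‖) := by
          have := hLip.dist_le_mul (x + t • d) x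
          rw [dist_eq_norm, dist_eq_norm] at this
          have hcoe : (Real.toNNReal L : ℝ) = L := Real.coe_toNNReal L hL.le
          rw [hcoe] at this
          have : ‖F' (x + t • d) - F' x‖ ≤ L * ‖x + t • d - x‖ := this
          simpa [norm_smul, abs_of_pos ht.1, mul_assoc] using this
        have hnd : (0:ℝ) ≤ ‖d‖ := norm_nonneg _
        nlinarith [norm_nonneg (F' (x + t • d) - F' x)]
      have : ⟪F' (x + t • d), d⟫ - C = ⟪F' (x + t • d) - F' x, d⟫ := by
        rw [hC, inner_sub_left]
      linarith [hipr, this.le, this.ge]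
  have h10 : h 1 ≤ h 0 := hanti (Set.mem_Icc.2 ⟨le_refl 0, zero_le_one⟩)
    (Set.mem_Icc.2 ⟨zero_le_one, le_refl 1⟩) zero_le_one
  have e1 : x + (1:ℝ) • d = y := by simp [hd]
  have e0 : x + (0:ℝ) • d = x := by simp
  simp only [hhdef, e1, e0] at h10
  simp only [one_pow, one_mul, zero_mul, mul_zero, zero_pow, sub_zero] at h10
  linarith [h10]

/-- First-order optimality for the prox subproblem. -/
lemma aux_prox_opt {η : ℝ} (hη : 0 < η) (R : E → ℝ) (hRconv : ConvexOn ℝ Set.univ R)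
    (u xp : E)
    (hxp : ∀ y : E, 1 / 2 * ‖xp - u‖ ^ 2 + η * R xp ≤ 1 / 2 * ‖y - u‖ ^ 2 + η * R y)
    (y : E) :
    0 ≤ ⟪xp - u, y - xp⟫ + η * (R y - R xp) := by
  set A : ℝ := ⟪xp - u, y - xp⟫ + η * (R y - R xp) with hA
  set B : ℝ := ‖y - xp‖ ^ 2 with hB
  have key : ∀ t : ℝ, 0 < t → t ≤ 1 → 0 ≤ A + t / 2 * B := by
    intro t ht0 ht1
    have hz : xp + t • (y - xp) = (1 - t) • xp + t • y := by
      simp [smul_sub, sub_smul]; abel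
    have hcv := hRconv.2 (Set.mem_univ xp) (Set.mem_univ y)
      (by linarith : (0:ℝ) ≤ 1 - t) ht0.le (by ring)
    have hR : R (xp + t • (y - xp)) ≤ (1 - t) * R xp + t * R y := by
      rw [hz]; simpa using hcv
    have hnorm : ‖xp + t • (y - xp) - u‖ ^ 2
        = ‖xp - u‖ ^ 2 + 2 * (t * ⟪xp - u, y - xp⟫) + t ^ 2 * B := by
      have : xp + t • (y - xp) - u = (xp - u) + t • (y - xp) := by abel
      rw [this, norm_add_sq_real, real_inner_smul_right, norm_smul, hB,
        mul_pow, Real.norm_eq_abs, sq_abs]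
    have h := hxp (xp + t • (y - xp))
    rw [hnorm] at h
    have h' : 0 ≤ t * ⟪xp - u, y - xp⟫ + t ^ 2 / 2 * B + η * (t * (R y - R xp)) := by
      nlinarith [h, hR]
    have : 0 ≤ t * (A + t / 2 * B) := by rw [hA]; nlinarith [h']
    nlinarith [this, ht0]
  by_contra hneg
  push_neg at hneg
  have hBpos : 0 < B := by
    rcases lt_or_eq_of_le (by positivity : (0:ℝ) ≤ B) with h | h
    · exact h
    · exfalso
      have hB0 : ‖y - xp‖ ^ 2 = 0 := by rw [← hB, ← h]
      have hn0 : ‖y - xp‖ = 0 := pow_eq_zero_iff two_ne_zero |>.mp hB0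
      have hyx : y = xp := by rwa [norm_eq_zero, sub_eq_zero] at hn0
      rw [hA, hyx] at hneg
      simp at hneg
  set t : ℝ := min 1 (-A / B) with htdef
  have htpos : 0 < t := lt_min one_pos (div_pos (by linarith) hBpos)
  have ht1 : t ≤ 1 := min_le_left _ _
  have htB : t * B ≤ -A := by
    have h1 : t ≤ -A / B := min_le_right _ _
    calc t * B ≤ (-A / B) * B := by nlinarith [hBpos]
      _ = -A := by field_simp
  have := key t htpos ht1
  nlinarith [this, htB, htpos, hBpos]

end Aux

/-- Per-step distance-decrease inequality for the proximal step:
with `x⁺ = prox_{ηR}(x - η v)` and `Δ = v - ∇F(x)`,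
`‖x⁺ - x*‖² ≤ ‖x - x*‖² - 2η (G x⁺ - G x*) - 2η ⟨Δ, x⁺ - x*⟩`. -/
theorem prox_step_distance_decrease
    {E : Type*} [NormedAddCommGroup E] [InnerProductSpace ℝ E] [FiniteDimensional ℝ E]
    (L η : ℝ) (hL : 0 < L) (hη : 0 < η) (hηL : η < 1 / L)
    (F : E → ℝ) (F' : E → E) (hF : ∀ x, HasGradientAt F (F' x) x)
    (hFconv : ConvexOn ℝ Set.univ F)
    (hLip : LipschitzWith (Real.toNNReal L) F')
    (R : E → ℝ) (hRconv : ConvexOn ℝ Set.univ R)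
    (G : E → ℝ) (hG : G = fun y => F y + R y)
    (xstar : E) (hmin : ∀ y, G xstar ≤ G y)
    (x v xp : E)
    (hxp : ∀ y : E, 1 / 2 * ‖xp - (x - η • v)‖ ^ 2 + η * R xp ≤
      1 / 2 * ‖y - (x - η • v)‖ ^ 2 + η * R y)
    (Δ : E) (hΔ : Δ = v - F' x) :
    ‖xp - xstar‖ ^ 2 ≤ ‖x - xstar‖ ^ 2 - 2 * η * (G xp - G xstar) -
      2 * η * ⟪Δ, xp - xstar⟫ := by
  -- prox optimality at xstar
  have hopt := aux_prox_opt hη R hRconv (x - η • v) xp hxp xstar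
  -- xp - (x - η•v) = xp - x + η•v
  have hexp : ⟪xp - (x - η • v), xstar - xp⟫
      = ⟪xp - x, xstar - xp⟫ + η * ⟪v, xstar - xp⟫ := by
    have : xp - (x - η • v) = (xp - x) + η • v := by abel
    rw [this, inner_add_left, real_inner_smul_left]
  -- convexity of F at (x, xstar)
  have hconv1 : F x + ⟪F' x, xstar - x⟫ ≤ F xstar :=
    aux_convex_grad F F' hF hFconv x xstar
  -- descent lemma at (x, xp)
  have hdesc : F xp ≤ F x + ⟪F' x, xp - x⟫ + L / 2 * ‖xp - x‖ ^ 2 :=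
    aux_descent L hL F F' hF hLip x xp
  -- combine: F xp - F xstar ≤ ⟪F' x, xp - xstar⟫ + L/2 ‖xp - x‖²
  have hFsum : F xp - F xstar ≤ ⟪F' x, xp - xstar⟫ + L / 2 * ‖xp - x‖ ^ 2 := by
    have hsplit : ⟪F' x, xp - x⟫ - ⟪F' x, xstar - x⟫ = ⟪F' x, xp - xstar⟫ := by
      rw [← inner_sub_right]
      congr 1
      abel
    linarith [hconv1, hdesc, hsplit.le, hsplit.ge]
  -- R part: η (R xp - R xstar) ≤ ⟪x - xp, xp - xstar⟫ - η ⟪v, xp - xstar⟫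
  have hRpart : η * (R xp - R xstar) ≤ ⟪x - xp, xp - xstar⟫ - η * ⟪v, xp - xstar⟫ := by
    have h1 : ⟪xp - x, xstar - xp⟫ = ⟪x - xp, xp - xstar⟫ := by
      rw [show xp - x = -(x - xp) by abel, show xstar - xp = -(xp - xstar) by abel,
        inner_neg_neg]
    have h2 : ⟪v, xstar - xp⟫ = -⟪v, xp - xstar⟫ := by
      rw [show xstar - xp = -(xp - xstar) by abel, inner_neg_right]
    rw [hexp, h1, h2] at hopt
    linarith [hopt]
  -- inner product with Δ
  have hΔinner : ⟪Δ, xp - xstar⟫ = ⟪v, xp - xstar⟫ - ⟪F' x, xp - xstar⟫ := by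
    rw [hΔ, inner_sub_left]
  -- norm identity
  have hnormid : ‖x - xstar‖ ^ 2 = ‖x - xp‖ ^ 2 + 2 * ⟪x - xp, xp - xstar⟫
      + ‖xp - xstar‖ ^ 2 := by
    have : x - xstar = (x - xp) + (xp - xstar) := by abel
    rw [this, norm_add_sq_real]
  -- ηL‖xp - x‖² ≤ ‖xp - x‖² and ‖xp - x‖ = ‖x - xp‖
  have hηL1 : η * L < 1 := by
    rw [lt_div_iff₀ hL] at hηL
    linarith
  have hnsym : ‖xp - x‖ = ‖x - xp‖ := norm_sub_rev _ _
  have hGdiff : G xp - G xstar = (F xp - F xstar) + (R xp - R xstar) := by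
    rw [hG]; ring
  rw [hGdiff, hΔinner]
  have hsq : (0:ℝ) ≤ ‖x - xp‖ ^ 2 := by positivity
  have hsq' : ‖xp - x‖ ^ 2 = ‖x - xp‖ ^ 2 := by rw [hnsym]
  have key1 : 2 * η * (F xp - F xstar) ≤
      2 * η * ⟪F' x, xp - xstar⟫ + η * L * ‖x - xp‖ ^ 2 := by
    nlinarith [mul_le_mul_of_nonneg_left hFsum (by positivity : (0:ℝ) ≤ 2 * η), hsq']
  have key2 : 2 * η * (R xp - R xstar) ≤
      2 * ⟪x - xp, xp - xstar⟫ - 2 * η * ⟪v, xp - xstar⟫ := by linarith [hRpart]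
  have key3 : η * L * ‖x - xp‖ ^ 2 ≤ ‖x - xp‖ ^ 2 := by nlinarith [hsq, hηL1]
  linarith [key1, key2, key3, hnormid]
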